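/- Let K be a countable division ring and let V and W be K-vector spaces (left K-modules) of the same uncountable cardinality. Then V and W are isomorphic as K-modules. -/
import Mathlib


open Cardinal

lemma rank_eq_mk_of_countable_aux {K : Type u} [DivisionRing K] [Countable K]
    {V : Type u} [AddCommGroup V] [Module K V] (hV : ℵ₀ < #V) :
    Module.rank K V = #V := by
  let b := Module.Free.chooseBasis K V
  have hmk : #V = #(Module.Free.ChooseBasisIndex K V →₀ K) := mk_congr b.repr.toEquiv
  have hinf : Infinite (Module.Free.ChooseBasisIndex K V) := by
    by_contra h
    rw [not_infinite_iff_finite] at h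
    have : Countable V := b.repr.toEquiv.countable_iff.mpr inferInstance
    exact absurd hV (not_lt.mpr (mk_le_aleph0_iff.mpr this))
  rw [Module.Free.rank_eq_card_chooseBasisIndex, hmk, mk_finsupp_of_infinite]
  have hK : #K ≤ ℵ₀ := mk_le_aleph0
  have hι : ℵ₀ < #(Module.Free.ChooseBasisIndex K V) := by
    by_contra h
    push_neg at h
    have : #(Module.Free.ChooseBasisIndex K V →₀ K) ≤ ℵ₀ := by
      rw [mk_finsupp_of_infinite]; exact max_le h hK
    exact absurd hV (not_lt.mpr (hmk ▸ this))
  exact (max_eq_left (hK.trans hι.le)).symm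

/-- Two vector spaces over a countable division ring with the same uncountable cardinality
are isomorphic as modules. -/
theorem vectorSpace_uncountably_categorical {K : Type u} [DivisionRing K] [Countable K]
    {V W : Type u} [AddCommGroup V] [Module K V] [AddCommGroup W] [Module K W]
    (hV : ℵ₀ < #V) (hVW : #V = #W) : Nonempty (V ≃ₗ[K] W) := by
  have hW : ℵ₀ < #W := hVW ▸ hV
  exact ⟨LinearEquiv.ofRankEq V W (by
    rw [rank_eq_mk_of_countable_aux hV, rank_eq_mk_of_countable_aux hW, hVW])⟩
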